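/- Let Ω be a compact metric space and let T : Ω → Ω be a minimal homeomorphism that is an isometry (dist(Tx, Ty) = dist(x, y) for all x, y ∈ Ω). Then (Ω,T) satisfies the global repetition property: for every ω ∈ Ω, the sequence {T^k ω}_{k≥0} has the repetition property. -/

import Mathlib

open Filter Topology MeasureTheory

/-- A sequence in a metric space has the repetition property if for every `ε > 0` and
`r > 0` there is a positive integer `q` such that `dist (u k) (u (k+q)) < ε` for all
`k = 0, 1, …, ⌊r * q⌋`. -/
def RepetitionProperty {Ω : Type*} [PseudoMetricSpace Ω] (u : ℕ → Ω) : Prop :=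
  ∀ ε > (0 : ℝ), ∀ r > (0 : ℝ), ∃ q : ℕ, 0 < q ∧
    ∀ k : ℕ, k ≤ ⌊r * q⌋₊ → dist (u k) (u (k + q)) < ε

/-- `PRP T` is the set of points whose forward orbit under `T` has the repetition
property. -/
def PRP {Ω : Type*} [PseudoMetricSpace Ω] (T : Ω → Ω) : Set Ω :=
  { ω | RepetitionProperty fun k => T^[k] ω }

lemma iterate_isometry {Ω : Type*} [MetricSpace Ω] (T : Ω → Ω)
    (hiso : ∀ x y : Ω, dist (T x) (T y) = dist x y) (n : ℕ) (x y : Ω) :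
    dist (T^[n] x) (T^[n] y) = dist x y := by
  induction n with
  | zero => simp
  | succ n ih =>
      rw [Function.iterate_succ_apply', Function.iterate_succ_apply', hiso, ih]

/-- Every minimal isometry of a compact metric space satisfies the global repetition
property: every forward orbit has the repetition property. -/
theorem minimal_isometry_GRP {Ω : Type*} [MetricSpace Ω] [CompactSpace Ω]
    (T : Ω ≃ₜ Ω)
    (hiso : ∀ x y : Ω, dist (T x) (T y) = dist x y)
    (hmin : ∀ ω : Ω, Dense (Set.range fun n : ℤ => (T.toEquiv ^ n) ω)) :
    ∀ ω : Ω, ω ∈ PRP (⇑T) := by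
  intro ω ε hε r hr
  set u : ℕ → Ω := fun n => (⇑T)^[n] ω with hu
  obtain ⟨x, hx⟩ : ∃ x : Ω, MapClusterPt x atTop u :=
    exists_clusterPt_of_compactSpace _
  have hball : Metric.ball x (ε / 2) ∈ 𝓝 x := Metric.ball_mem_nhds x (by linarith)
  have hfreq : ∃ᶠ n in atTop, u n ∈ Metric.ball x (ε / 2) :=
    mapClusterPt_iff_frequently.mp hx _ hball
  obtain ⟨n, hn⟩ := hfreq.exists
  obtain ⟨m, hmball, hnm⟩ := (hfreq.and_eventually (eventually_gt_atTop n)).exists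
  have hdist : dist (u n) (u m) < ε := by
    have h1 : dist x (u n) < ε / 2 := by simpa [Metric.mem_ball, dist_comm] using hn
    have h2 : dist x (u m) < ε / 2 := by simpa [Metric.mem_ball, dist_comm] using hmball
    calc dist (u n) (u m) ≤ dist x (u n) + dist x (u m) := by
          rw [dist_comm x (u n)]; exact dist_triangle _ _ _
      _ < ε := by linarith
  set q : ℕ := m - n with hq
  have hmn : m = n + q := (Nat.add_sub_cancel' hnm.le).symm
  refine ⟨q, Nat.sub_pos_of_lt hnm, ?_⟩
  have hrec : dist ω ((⇑T)^[q] ω) < ε := by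
    have : dist (u n) (u m) = dist ω ((⇑T)^[q] ω) := by
      rw [hu, hmn]
      simp only
      rw [Function.iterate_add_apply]
      exact iterate_isometry _ hiso n _ _
    rwa [this] at hdist
  intro k _
  have hk : dist ((⇑T)^[k] ω) ((⇑T)^[k + q] ω) = dist ω ((⇑T)^[q] ω) := by
    rw [Function.iterate_add_apply]
    exact iterate_isometry _ hiso k _ _
  simpa [hk, hu] using hrec
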